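/- In the GPRK setting for the adjoint of a partitioned system (no conditions on coefficients), the difference (λ_{n+1}^{[1]})^⊤ δ_{n+1}^{[1]} + (λ_{n+1}^{[2]})^⊤ δ_{n+1}^{[2]} - (λ_n^{[1]})^⊤ δ_n^{[1]} - (λ_n^{[2]})^⊤ δ_n^{[2]} equals h Σ_i (b_i^{[1]} - B_i^{[11]}) (Λ_i^{[1]})^⊤ J_i^{11} D_i^{[1]} + h Σ_i (b_i^{[1]} - B_i^{[21]}) (Λ_i^{[1]})^⊤ J_i^{12} D_i^{[2]} + h Σ_i (b_i^{[2]} - B_i^{[12]}) (Λ_i^{[2]})^⊤ J_i^{21} D_i^{[1]} + h Σ_i (b_i^{[2]} - B_i^{[22]}) (Λ_i^{[2]})^⊤ J_i^{22} D_i^{[2]} + h² Σ_{i,j} (b_i^{[1]} A_{ij}^{[11]} + B_j^{[11]} a_{ji}^{[1]} - b_i^{[1]} B_j^{[11]}) (l_j^{[11]})^⊤ m_i^{[1]} + h² Σ_{i,j} (b_i^{[1]} A_{ij}^{[12]} + B_j^{[12]} a_{ji}^{[1]} - b_i^{[1]} B_j^{[12]}) (l_j^{[12]})^⊤ m_i^{[1]}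 + h² Σ_{i,j} (b_i^{[2]} A_{ij}^{[21]} + B_j^{[21]} a_{ji}^{[2]} - b_i^{[2]} B_j^{[21]}) (l_j^{[21]})^⊤ m_i^{[2]} + h² Σ_{i,j} (b_i^{[2]} A_{ij}^{[22]} + B_j^{[22]} a_{ji}^{[2]} - b_i^{[2]} B_j^{[22]}) (l_j^{[22]})^⊤ m_i^{[2]}. -/

import Mathlib

private lemma dotProduct_sum' {n : Type*} [Fintype n] {ι : Type*} (t : Finset ι)
    (v : n → ℝ) (f : ι → n → ℝ) :
    dotProduct v (∑ i ∈ t, f i) = ∑ i ∈ t, dotProduct v (f i) := by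
  unfold dotProduct
  rw [Finset.sum_comm]
  congr 1; ext j
  rw [Finset.sum_apply, Finset.mul_sum]

private lemma sum_dotProduct' {n : Type*} [Fintype n] {ι : Type*} (t : Finset ι)
    (v : n → ℝ) (f : ι → n → ℝ) :
    dotProduct (∑ i ∈ t, f i) v = ∑ i ∈ t, dotProduct (f i) v := by
  unfold dotProduct
  rw [Finset.sum_comm]
  congr 1; ext j
  rw [Finset.sum_apply, Finset.sum_mul]


private lemma gprk_rswap {s : ℕ} (b B : Fin s → ℝ) (A a X : Fin s → Fin s → ℝ) :
    ∑ i, ∑ j, (b i * A i j + B j * a j i - b i * B j) * X j i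
      = ∑ i, (b i * ∑ j, A i j * X j i - b i * ∑ j, B j * X j i + B i * ∑ j, a i j * X i j) := by
  calc ∑ i, ∑ j, (b i * A i j + B j * a j i - b i * B j) * X j i
      = ∑ i, ((b i * ∑ j, A i j * X j i - b i * ∑ j, B j * X j i) + ∑ j, B j * (a j i * X j i)) := by
        refine Finset.sum_congr rfl fun i _ => ?_
        rw [Finset.mul_sum, Finset.mul_sum, ← Finset.sum_sub_distrib, ← Finset.sum_add_distrib]
        exact Finset.sum_congr rfl fun j _ => by ring
    _ = (∑ i, (b i * ∑ j, A i j * X j i - b i * ∑ j, B j * X j i))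
          + ∑ i, ∑ j, B j * (a j i * X j i) := Finset.sum_add_distrib
    _ = (∑ i, (b i * ∑ j, A i j * X j i - b i * ∑ j, B j * X j i))
          + ∑ j, ∑ i, B j * (a j i * X j i) := by rw [Finset.sum_comm]
    _ = (∑ i, (b i * ∑ j, A i j * X j i - b i * ∑ j, B j * X j i))
          + ∑ i, B i * ∑ j, a i j * X i j := by
        congr 1
        exact Finset.sum_congr rfl fun j _ => by rw [← Finset.mul_sum]
    _ = ∑ i, (b i * ∑ j, A i j * X j i - b i * ∑ j, B j * X j i + B i * ∑ j, a i j * X i j) :=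
        Finset.sum_add_distrib.symm


/-- Exact expression for the change of `(λ¹)ᵀδ¹ + (λ²)ᵀδ²` over one combined
PRK/GPRK step, for arbitrary coefficients. -/
theorem gprk_adjoint_step_difference
    (d₁ d₂ s : ℕ) (h : ℝ)
    (a1 a2 : Fin s → Fin s → ℝ) (b1 b2 : Fin s → ℝ)
    (A11 A12 A21 A22 : Fin s → Fin s → ℝ) (B11 B12 B21 B22 : Fin s → ℝ)
    (J11 : Fin s → Matrix (Fin d₁) (Fin d₁) ℝ)
    (J12 : Fin s → Matrix (Fin d₁) (Fin d₂) ℝ)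
    (J21 : Fin s → Matrix (Fin d₂) (Fin d₁) ℝ)
    (J22 : Fin s → Matrix (Fin d₂) (Fin d₂) ℝ)
    (δ1n δ1n1 lam1n lam1n1 : Fin d₁ → ℝ) (δ2n δ2n1 lam2n lam2n1 : Fin d₂ → ℝ)
    (m1 D1 : Fin s → (Fin d₁ → ℝ)) (m2 D2 : Fin s → (Fin d₂ → ℝ))
    (l11 l12 Λ1 : Fin s → (Fin d₁ → ℝ)) (l21 l22 Λ2 : Fin s → (Fin d₂ → ℝ))
    (hδ1 : δ1n1 = δ1n + h • ∑ i, b1 i • m1 i)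
    (hδ2 : δ2n1 = δ2n + h • ∑ i, b2 i • m2 i)
    (hm1 : ∀ i, m1 i = (J11 i).mulVec (D1 i) + (J12 i).mulVec (D2 i))
    (hm2 : ∀ i, m2 i = (J21 i).mulVec (D1 i) + (J22 i).mulVec (D2 i))
    (hD1 : ∀ i, D1 i = δ1n + h • ∑ j, a1 i j • m1 j)
    (hD2 : ∀ i, D2 i = δ2n + h • ∑ j, a2 i j • m2 j)
    (hlam1 : lam1n1 = lam1n - h • ∑ i, (B11 i • l11 i + B12 i • l12 i))
    (hlam2 : lam2n1 = lam2n - h • ∑ i, (B21 i • l21 i + B22 i • l22 i))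
    (hl11 : ∀ i, l11 i = (J11 i).transpose.mulVec (Λ1 i))
    (hl12 : ∀ i, l12 i = (J21 i).transpose.mulVec (Λ2 i))
    (hl21 : ∀ i, l21 i = (J12 i).transpose.mulVec (Λ1 i))
    (hl22 : ∀ i, l22 i = (J22 i).transpose.mulVec (Λ2 i))
    (hΛ1 : ∀ i, Λ1 i = lam1n - h • ∑ j, (A11 i j • l11 j + A12 i j • l12 j))
    (hΛ2 : ∀ i, Λ2 i = lam2n - h • ∑ j, (A21 i j • l21 j + A22 i j • l22 j)) :
    dotProduct lam1n1 δ1n1 + dotProduct lam2n1 δ2n1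
      - dotProduct lam1n δ1n - dotProduct lam2n δ2n
      = h * ∑ i, (b1 i - B11 i) * dotProduct (Λ1 i) ((J11 i).mulVec (D1 i))
        + h * ∑ i, (b1 i - B21 i) * dotProduct (Λ1 i) ((J12 i).mulVec (D2 i))
        + h * ∑ i, (b2 i - B12 i) * dotProduct (Λ2 i) ((J21 i).mulVec (D1 i))
        + h * ∑ i, (b2 i - B22 i) * dotProduct (Λ2 i) ((J22 i).mulVec (D2 i))
        + h ^ 2 * ∑ i, ∑ j, (b1 i * A11 i j + B11 j * a1 j i - b1 i * B11 j)
            * dotProduct (l11 j) (m1 i)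
        + h ^ 2 * ∑ i, ∑ j, (b1 i * A12 i j + B12 j * a1 j i - b1 i * B12 j)
            * dotProduct (l12 j) (m1 i)
        + h ^ 2 * ∑ i, ∑ j, (b2 i * A21 i j + B21 j * a2 j i - b2 i * B21 j)
            * dotProduct (l21 j) (m2 i)
        + h ^ 2 * ∑ i, ∑ j, (b2 i * A22 i j + B22 j * a2 j i - b2 i * B22 j)
            * dotProduct (l22 j) (m2 i) := by
    -- stage dot-product identities
  have e11 : ∀ i, dotProduct (Λ1 i) ((J11 i).mulVec (D1 i))
      = dotProduct (l11 i) δ1n + h * ∑ j, a1 i j * dotProduct (l11 i) (m1 j) := by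
    intro i
    rw [show dotProduct (Λ1 i) ((J11 i).mulVec (D1 i))
        = dotProduct (l11 i) (D1 i) by
      rw [hl11 i, Matrix.mulVec_transpose, Matrix.dotProduct_mulVec], hD1 i]
    simp [dotProduct_add, dotProduct_smul, dotProduct_sum', smul_eq_mul,
      Finset.mul_sum]
  have e12 : ∀ i, dotProduct (Λ1 i) ((J12 i).mulVec (D2 i))
      = dotProduct (l21 i) δ2n + h * ∑ j, a2 i j * dotProduct (l21 i) (m2 j) := by
    intro i
    rw [show dotProduct (Λ1 i) ((J12 i).mulVec (D2 i))
        = dotProduct (l21 i) (D2 i) by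
      rw [hl21 i, Matrix.mulVec_transpose, Matrix.dotProduct_mulVec], hD2 i]
    simp [dotProduct_add, dotProduct_smul, dotProduct_sum', smul_eq_mul,
      Finset.mul_sum]
  have e21 : ∀ i, dotProduct (Λ2 i) ((J21 i).mulVec (D1 i))
      = dotProduct (l12 i) δ1n + h * ∑ j, a1 i j * dotProduct (l12 i) (m1 j) := by
    intro i
    rw [show dotProduct (Λ2 i) ((J21 i).mulVec (D1 i))
        = dotProduct (l12 i) (D1 i) by
      rw [hl12 i, Matrix.mulVec_transpose, Matrix.dotProduct_mulVec], hD1 i]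
    simp [dotProduct_add, dotProduct_smul, dotProduct_sum', smul_eq_mul,
      Finset.mul_sum]
  have e22 : ∀ i, dotProduct (Λ2 i) ((J22 i).mulVec (D2 i))
      = dotProduct (l22 i) δ2n + h * ∑ j, a2 i j * dotProduct (l22 i) (m2 j) := by
    intro i
    rw [show dotProduct (Λ2 i) ((J22 i).mulVec (D2 i))
        = dotProduct (l22 i) (D2 i) by
      rw [hl22 i, Matrix.mulVec_transpose, Matrix.dotProduct_mulVec], hD2 i]
    simp [dotProduct_add, dotProduct_smul, dotProduct_sum', smul_eq_mul,
      Finset.mul_sum]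
  have f1 : ∀ i, dotProduct lam1n (m1 i)
      = (dotProduct (l11 i) δ1n + h * ∑ j, a1 i j * dotProduct (l11 i) (m1 j))
        + (dotProduct (l21 i) δ2n + h * ∑ j, a2 i j * dotProduct (l21 i) (m2 j))
        + h * ∑ j, (A11 i j * dotProduct (l11 j) (m1 i)
            + A12 i j * dotProduct (l12 j) (m1 i)) := by
    intro i
    have hl : lam1n = Λ1 i + h • ∑ j, (A11 i j • l11 j + A12 i j • l12 j) := by
      rw [hΛ1 i]; abel
    rw [hl, add_dotProduct, smul_dotProduct, sum_dotProduct',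
      show dotProduct (Λ1 i) (m1 i)
        = dotProduct (Λ1 i) ((J11 i).mulVec (D1 i))
          + dotProduct (Λ1 i) ((J12 i).mulVec (D2 i)) by
        rw [hm1 i, dotProduct_add], e11 i, e12 i]
    simp only [add_dotProduct, smul_dotProduct, smul_eq_mul, Finset.mul_sum]

  have f2 : ∀ i, dotProduct lam2n (m2 i)
      = (dotProduct (l12 i) δ1n + h * ∑ j, a1 i j * dotProduct (l12 i) (m1 j))
        + (dotProduct (l22 i) δ2n + h * ∑ j, a2 i j * dotProduct (l22 i) (m2 j))
        + h * ∑ j, (A21 i j * dotProduct (l21 j) (m2 i)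
            + A22 i j * dotProduct (l22 j) (m2 i)) := by
    intro i
    have hl : lam2n = Λ2 i + h • ∑ j, (A21 i j • l21 j + A22 i j • l22 j) := by
      rw [hΛ2 i]; abel
    rw [hl, add_dotProduct, smul_dotProduct, sum_dotProduct',
      show dotProduct (Λ2 i) (m2 i)
        = dotProduct (Λ2 i) ((J21 i).mulVec (D1 i))
          + dotProduct (Λ2 i) ((J22 i).mulVec (D2 i)) by
        rw [hm2 i, dotProduct_add], e21 i, e22 i]
    simp only [add_dotProduct, smul_dotProduct, smul_eq_mul, Finset.mul_sum]

  subst hδ1 hδ2 hlam1 hlam2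
  simp only [sub_dotProduct, dotProduct_add, add_dotProduct,
    dotProduct_smul, smul_dotProduct, sum_dotProduct', dotProduct_sum',
    smul_eq_mul, f1, f2, e11, e12, e21, e22, Finset.sum_add_distrib]
  simp only [gprk_rswap]
  trans (∑ x : Fin s,
      (h * (b1 x *
          (dotProduct (l11 x) δ1n + h * ∑ j, a1 x j * dotProduct (l11 x) (m1 j) +
              (dotProduct (l21 x) δ2n + h * ∑ j, a2 x j * dotProduct (l21 x) (m2 j)) +
            h * (∑ j, A11 x j * dotProduct (l11 j) (m1 x) +
                  ∑ j, A12 x j * dotProduct (l12 j) (m1 x))))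
        - h * h * (b1 x * ∑ j, B11 j * dotProduct (l11 j) (m1 x))
        - h * h * (b1 x * ∑ j, B12 j * dotProduct (l12 j) (m1 x))
        - h * (B11 x * dotProduct (l11 x) δ1n)
        - h * (B12 x * dotProduct (l12 x) δ1n)
        + h * (b2 x *
          (dotProduct (l12 x) δ1n + h * ∑ j, a1 x j * dotProduct (l12 x) (m1 j) +
              (dotProduct (l22 x) δ2n + h * ∑ j, a2 x j * dotProduct (l22 x) (m2 j)) +
            h * (∑ j, A21 x j * dotProduct (l21 j) (m2 x) +
                  ∑ j, A22 x j * dotProduct (l22 j) (m2 x))))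
        - h * h * (b2 x * ∑ j, B21 j * dotProduct (l21 j) (m2 x))
        - h * h * (b2 x * ∑ j, B22 j * dotProduct (l22 j) (m2 x))
        - h * (B21 x * dotProduct (l21 x) δ2n)
        - h * (B22 x * dotProduct (l22 x) δ2n)))
  · simp only [Finset.sum_add_distrib, Finset.sum_sub_distrib, ← Finset.mul_sum]
    ring
  trans (∑ x : Fin s,
      (h * ((b1 x - B11 x) *
          (dotProduct (l11 x) δ1n + h * ∑ j, a1 x j * dotProduct (l11 x) (m1 j)))
        + h * ((b1 x - B21 x) *
          (dotProduct (l21 x) δ2n + h * ∑ j, a2 x j * dotProduct (l21 x) (m2 j)))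
        + h * ((b2 x - B12 x) *
          (dotProduct (l12 x) δ1n + h * ∑ j, a1 x j * dotProduct (l12 x) (m1 j)))
        + h * ((b2 x - B22 x) *
          (dotProduct (l22 x) δ2n + h * ∑ j, a2 x j * dotProduct (l22 x) (m2 j)))
        + h ^ 2 * (b1 x * ∑ j, A11 x j * dotProduct (l11 j) (m1 x) -
            b1 x * ∑ j, B11 j * dotProduct (l11 j) (m1 x) +
            B11 x * ∑ j, a1 x j * dotProduct (l11 x) (m1 j))
        + h ^ 2 * (b1 x * ∑ j, A12 x j * dotProduct (l12 j) (m1 x) -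
            b1 x * ∑ j, B12 j * dotProduct (l12 j) (m1 x) +
            B12 x * ∑ j, a1 x j * dotProduct (l12 x) (m1 j))
        + h ^ 2 * (b2 x * ∑ j, A21 x j * dotProduct (l21 j) (m2 x) -
            b2 x * ∑ j, B21 j * dotProduct (l21 j) (m2 x) +
            B21 x * ∑ j, a2 x j * dotProduct (l21 x) (m2 j))
        + h ^ 2 * (b2 x * ∑ j, A22 x j * dotProduct (l22 j) (m2 x) -
            b2 x * ∑ j, B22 j * dotProduct (l22 j) (m2 x) +
            B22 x * ∑ j, a2 x j * dotProduct (l22 x) (m2 j))))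
  · exact Finset.sum_congr rfl fun x _ => by ring
  · simp only [Finset.sum_add_distrib, Finset.sum_sub_distrib, ← Finset.mul_sum]
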